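/- Let D be a division ring, A ∈ D^{n×n} invertible, u ∈ D^{1×n}, v ∈ D^{n×1} with f = u A⁻¹ v ≠ 0. Then the (n+1)×(n+1) matrix A' = [[Σ v, −Σ A Σ],[0, u Σ]] is invertible and e_1 (A')⁻¹ e_{n+1} = f⁻¹, where Σ = Σ_n is the order-reversing permutation matrix. -/
import Mathlib

private theorem aux_rev {D : Type*} [Semiring D] {n : ℕ} {α β γ δ : Type*}
    (M : Matrix α (Fin n) D) (N : Matrix (Fin n) β D) (a : γ → α) (b : δ → β) :
    M.submatrix a Fin.rev * N.submatrix Fin.rev b = (M * N).submatrix a b :=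
  Matrix.submatrix_mul_equiv M N a Fin.revPerm b

private theorem aux_id {D : Type*} [Semiring D] {m : Type*} [Fintype m]
    {α β γ δ : Type*} (M : Matrix α m D) (N : Matrix m β D) (a : γ → α) (b : δ → β) :
    M.submatrix a id * N.submatrix id b = (M * N).submatrix a b :=
  Matrix.submatrix_mul_equiv M N a (Equiv.refl m) b

private theorem aux_addsub {D : Type*} [Semiring D] {α β γ δ : Type*}
    (M N : Matrix α β D) (a : γ → α) (b : δ → β) :
    M.submatrix a b + N.submatrix a b = (M + N).submatrix a b :=
  rfl

/-- Minimal inverse, type (0,0): if `f = u A⁻¹ v ≠ 0` over a division ring, then the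
`(n+1)×(n+1)` matrix `A' = [[Σ v, −Σ A Σ],[0, u Σ]]` is invertible and
`e_1 (A')⁻¹ e_{n+1} = f⁻¹` (where `Σ = Σ_n` reverses the order of rows/columns). -/
theorem stmt15 {D : Type*} [DivisionRing D] {n : ℕ}
    (A Ainv : Matrix (Fin n) (Fin n) D) (hA : A * Ainv = 1 ∧ Ainv * A = 1)
    (u : Matrix (Fin 1) (Fin n) D) (v : Matrix (Fin n) (Fin 1) D)
    (f : D) (hf : f = (u * Ainv * v) 0 0) (hf0 : f ≠ 0)
    (A' : Matrix (Fin n ⊕ Fin 1) (Fin 1 ⊕ Fin n) D)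
    (hA' : A' = Matrix.of fun i j =>
      match i, j with
      | .inl i, .inl _ => v i.rev 0
      | .inl i, .inr j => -(A i.rev j.rev)
      | .inr _, .inl _ => 0
      | .inr _, .inr j => u 0 j.rev) :
    ∃ C : Matrix (Fin 1 ⊕ Fin n) (Fin n ⊕ Fin 1) D,
      A' * C = 1 ∧ C * A' = 1 ∧ C (Sum.inl 0) (Sum.inr 0) = f⁻¹ := by
  obtain ⟨h1, h2⟩ := hA
  set B := Ainv with hB
  set r : Matrix (Fin 1) (Fin n) D := u * B with hr
  set w : Matrix (Fin n) (Fin 1) D := B * v with hw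
  set F : Matrix (Fin 1) (Fin 1) D := f⁻¹ • 1 with hF
  have hA'b : A' = Matrix.fromBlocks (v.submatrix Fin.rev id)
      (-(A.submatrix Fin.rev Fin.rev)) 0 (u.submatrix id Fin.rev) := by
    rw [hA']; ext i j
    rcases i with i | i <;> rcases j with j | j
    · obtain rfl : j = (0 : Fin 1) := Subsingleton.elim _ _
      simp [Matrix.fromBlocks]
    · simp [Matrix.fromBlocks]
    · simp [Matrix.fromBlocks]
    · obtain rfl : i = (0 : Fin 1) := Subsingleton.elim _ _
      simp [Matrix.fromBlocks]
  have hrv : r * v = Matrix.of (fun _ _ => f) := by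
    ext i j
    fin_cases i; fin_cases j
    simpa [hr] using hf.symm
  have hFrv : F * (r * v) = 1 := by
    rw [hrv]; ext i j
    fin_cases i; fin_cases j
    simp [hF, Matrix.mul_apply, inv_mul_cancel₀ hf0]
  have hrvF : (r * v) * F = 1 := by
    rw [hrv]; ext i j
    fin_cases i; fin_cases j
    simp [hF, Matrix.mul_apply, mul_inv_cancel₀ hf0]
  have hrA : r * A = u := by
    rw [hr, Matrix.mul_assoc, h2, Matrix.mul_one]
  refine ⟨Matrix.fromBlocks ((F * r).submatrix id Fin.rev) (F.submatrix id id)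
      (-((B - w * (F * r)).submatrix Fin.rev Fin.rev)) ((w * F).submatrix Fin.rev id),
      ?_, ?_, ?_⟩
  · rw [hA'b, Matrix.fromBlocks_multiply]
    have E : ∀ (X1 : Matrix (Fin n) (Fin n) D) (X2 : Matrix (Fin n) (Fin 1) D)
        (X3 : Matrix (Fin 1) (Fin n) D) (X4 : Matrix (Fin 1) (Fin 1) D),
        X1 = 1 → X2 = 0 → X3 = 0 → X4 = 1 →
        Matrix.fromBlocks X1 X2 X3 X4 = (1 : Matrix (Fin n ⊕ Fin 1) (Fin n ⊕ Fin 1) D) := by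
      rintro _ _ _ _ rfl rfl rfl rfl; exact Matrix.fromBlocks_one
    refine E _ _ _ _ ?_ ?_ ?_ ?_
    · rw [neg_mul_neg, aux_id, aux_rev, aux_addsub]
      have k1 : v * (F * r) + A * (B - w * (F * r)) = 1 := by
        rw [Matrix.mul_sub, h1, ← Matrix.mul_assoc A w, hw, ← Matrix.mul_assoc A B v, h1,
          Matrix.one_mul]
        abel
      rw [k1]
      exact Matrix.submatrix_one_equiv Fin.revPerm
    · rw [aux_id, Matrix.neg_mul, aux_rev]
      have k2 : A * (w * F) = v * F := by
        rw [← Matrix.mul_assoc, hw, ← Matrix.mul_assoc, h1, Matrix.one_mul]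
      rw [k2, add_neg_cancel]
    · rw [Matrix.zero_mul, Matrix.mul_neg, aux_rev]
      have e1 : u * (w * (F * r)) = (r * v) * (F * r) := by
        rw [← Matrix.mul_assoc u w, hw, ← Matrix.mul_assoc u B v, ← hr]
      have e2 : (r * v) * (F * r) = r := by
        rw [← Matrix.mul_assoc, hrvF, Matrix.one_mul]
      have k3 : u * (B - w * (F * r)) = 0 := by
        rw [Matrix.mul_sub, e1, e2, ← hr, sub_self]
      rw [k3]
      simp
    · rw [Matrix.zero_mul, aux_rev]
      have k4 : u * (w * F) = 1 := by
        rw [← Matrix.mul_assoc u w, hw, ← Matrix.mul_assoc u B v, ← hr, hrvF]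
      rw [k4, zero_add, Matrix.submatrix_id_id]
  · rw [hA'b, Matrix.fromBlocks_multiply]
    have E : ∀ (X1 : Matrix (Fin 1) (Fin 1) D) (X2 : Matrix (Fin 1) (Fin n) D)
        (X3 : Matrix (Fin n) (Fin 1) D) (X4 : Matrix (Fin n) (Fin n) D),
        X1 = 1 → X2 = 0 → X3 = 0 → X4 = 1 →
        Matrix.fromBlocks X1 X2 X3 X4 = (1 : Matrix (Fin 1 ⊕ Fin n) (Fin 1 ⊕ Fin n) D) := by
      rintro _ _ _ _ rfl rfl rfl rfl; exact Matrix.fromBlocks_one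
    refine E _ _ _ _ ?_ ?_ ?_ ?_
    · rw [Matrix.mul_zero, add_zero, aux_rev, Matrix.mul_assoc, hFrv, Matrix.submatrix_id_id]
    · rw [Matrix.mul_neg, aux_rev, aux_id]
      have k5 : (F * r) * A = F * u := by
        rw [Matrix.mul_assoc, hrA]
      rw [k5, neg_add_cancel]
    · rw [Matrix.mul_zero, add_zero, Matrix.neg_mul, aux_rev]
      have k6 : (B - w * (F * r)) * v = 0 := by
        rw [Matrix.sub_mul, Matrix.mul_assoc w (F * r) v, Matrix.mul_assoc F r v, hFrv,
          Matrix.mul_one, ← hw, sub_self]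
      rw [k6]
      simp
    · rw [neg_mul_neg, aux_rev, aux_id, aux_addsub]
      have k7 : (B - w * (F * r)) * A + (w * F) * u = 1 := by
        rw [Matrix.sub_mul, h2, Matrix.mul_assoc w (F * r) A, Matrix.mul_assoc F r A, hrA,
          ← Matrix.mul_assoc w F u]
        abel
      rw [k7]
      exact Matrix.submatrix_one_equiv Fin.revPerm
  · simp [Matrix.fromBlocks, hF]
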